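/- Let K be a field and b, c ∈ K such that the Kubert-Tate curve E(b,c) has nonzero discriminant. Then the point (0,0) on E(b,c) has order exactly 6 if and only if b = c + c². -/

import Mathlib

open WeierstrassCurve Affine WeierstrassCurve.Affine.Point

/-- The Kubert-Tate normal form curve E(b,c) : y^2 + (1-c)xy - by = x^3 - bx^2. -/
def Ebc {K : Type*} [CommRing K] (b c : K) : WeierstrassCurve.Affine K :=
  { a₁ := 1 - c, a₂ := -b, a₃ := -b, a₄ := 0, a₆ := 0 }
/-- The point (0, 0) on E(b,c), nonsingular since the discriminant is nonzero. -/
noncomputable def P₀ {K : Type*} [Field K] (b c : K) (hΔ : (Ebc b c).Δ ≠ 0) :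
    WeierstrassCurve.Affine.Point (Ebc b c) :=
  .some 0 0 ((WeierstrassCurve.Affine.equation_iff_nonsingular_of_Δ_ne_zero hΔ).mp
    (WeierstrassCurve.Affine.equation_zero.mpr rfl))

lemma some_eq_some {K : Type*} [CommRing K] {W : WeierstrassCurve.Affine K}
    {x₁ y₁ x₂ y₂ : K} {h₁ : W.Nonsingular x₁ y₁} {h₂ : W.Nonsingular x₂ y₂}
    (hx : x₁ = x₂) (hy : y₁ = y₂) : Point.some _ _ h₁ = Point.some _ _ h₂ := by
  subst hx hy; rfl

section

variable {K : Type*} [Field K] (b c : K)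

open Classical

lemma hbne (hΔ : (Ebc b c).Δ ≠ 0) : b ≠ 0 := by
  intro hb
  apply hΔ
  subst hb
  simp [Ebc, WeierstrassCurve.Δ, WeierstrassCurve.b₂, WeierstrassCurve.b₄,
    WeierstrassCurve.b₆, WeierstrassCurve.b₈]

lemma ns2 (hΔ : (Ebc b c).Δ ≠ 0) : (Ebc b c).Nonsingular b (b * c) :=
  (equation_iff_nonsingular_of_Δ_ne_zero hΔ).mp (by rw [equation_iff]; show _ = _; simp [Ebc]; ring)

lemma ns3 (hΔ : (Ebc b c).Δ ≠ 0) : (Ebc b c).Nonsingular c (b - c) :=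
  (equation_iff_nonsingular_of_Δ_ne_zero hΔ).mp (by rw [equation_iff]; show _ = _; simp [Ebc]; ring)

lemma two_P (hΔ : (Ebc b c).Δ ≠ 0) :
    P₀ b c hΔ + P₀ b c hΔ = Point.some _ _ (ns2 b c hΔ) := by
  have hy : (0 : K) ≠ (Ebc b c).negY 0 0 := by
    simp only [negY, Ebc]
    simpa using (hbne b c hΔ).symm
  rw [P₀, add_self_of_Y_ne hy]
  have hs : (Ebc b c).slope 0 0 0 0 = 0 := by
    rw [slope_of_Y_ne rfl hy]
    simp [Ebc]
  refine some_eq_some ?_ ?_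
  · rw [hs]; simp [addX, Ebc]
  · rw [hs]; simp [addY, negAddY, addX, negY, Ebc]; ring

lemma three_P (hΔ : (Ebc b c).Δ ≠ 0) :
    Point.some _ _ (ns2 b c hΔ) + P₀ b c hΔ = Point.some _ _ (ns3 b c hΔ) := by
  rw [P₀, add_of_X_ne (hbne b c hΔ)]
  have hs : (Ebc b c).slope b 0 (b * c) 0 = c := by
    rw [slope_of_X_ne (hbne b c hΔ), sub_zero, sub_zero, mul_comm,
      mul_div_assoc, div_self (hbne b c hΔ), mul_one]
  refine some_eq_some ?_ ?_
  · rw [hs]; simp [addX, Ebc]; ring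
  · rw [hs]; simp [addY, negAddY, addX, negY, Ebc]; ring

end

open Classical in
theorem stmt_7 {K : Type*} [Field K] (b c : K) (hΔ : (Ebc b c).Δ ≠ 0) :
    addOrderOf (P₀ b c hΔ) = 6 ↔ b = c + c ^ 2 := by
  have h3P : 3 • P₀ b c hΔ = Point.some _ _ (ns3 b c hΔ) := by
    rw [show (3 : ℕ) = 2 + 1 from rfl, add_nsmul, two_nsmul, one_nsmul, two_P, three_P]
  constructor
  · intro h
    have h6P : (6 : ℕ) • P₀ b c hΔ = 0 := by
      rw [← h]; exact addOrderOf_nsmul_eq_zero _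
    rw [show (6 : ℕ) = 3 + 3 from rfl, add_nsmul, h3P] at h6P
    by_cases hy : b - c = (Ebc b c).negY c (b - c)
    · simp only [negY, Ebc] at hy
      linear_combination hy
    · rw [add_self_of_Y_ne hy] at h6P
      exact absurd h6P (some_ne_zero _)
  · intro h
    have hy : b - c = (Ebc b c).negY c (b - c) := by
      simp only [negY, Ebc]; linear_combination h
    have h6P : (6 : ℕ) • P₀ b c hΔ = 0 := by
      rw [show (6 : ℕ) = 3 + 3 from rfl, add_nsmul, h3P, add_self_of_Y_eq hy]
    have h1ne : P₀ b c hΔ ≠ 0 := some_ne_zero _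
    have h2ne : (2 : ℕ) • P₀ b c hΔ ≠ 0 := by
      rw [two_nsmul, two_P]; exact some_ne_zero _
    have h3ne : (3 : ℕ) • P₀ b c hΔ ≠ 0 := by
      rw [h3P]; exact some_ne_zero _
    have hdvd : addOrderOf (P₀ b c hΔ) ∣ 6 := addOrderOf_dvd_of_nsmul_eq_zero h6P
    have hle : addOrderOf (P₀ b c hΔ) ≤ 6 := Nat.le_of_dvd (by norm_num) hdvd
    have hsm : addOrderOf (P₀ b c hΔ) • P₀ b c hΔ = 0 := addOrderOf_nsmul_eq_zero _
    interval_cases h : addOrderOf (P₀ b c hΔ)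
    · norm_num at hdvd
    · rw [one_nsmul] at hsm; exact absurd hsm h1ne
    · exact absurd hsm h2ne
    · exact absurd hsm h3ne
    · norm_num at hdvd
    · norm_num at hdvd
    · rfl
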